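/- arXiv:1910.09248 — 5 statements merged into one kernel-verified Lean document; each statement's English description precedes it below -/
import Mathlib

section
/- A point s' ∈ X satisfies D_∞(s') = 0 if and only if there exists t' ∈ ℝ with t_i = t' + ρ(r_i, s') for all i ∈ I, i.e. s' is a solution of the sound ranging problem. -/
theorem stmt4 {X I : Type*} [MetricSpace X] [Nonempty I] (s s' : X) (t0 : ℝ)
    (rs : I → X) (hb : Bornology.IsBounded (Set.range rs))
    (t : I → ℝ) (ht : ∀ i, t i = t0 + dist (rs i) s) :
    (⨆ p : I × I,
        |(t p.1 - dist s' (rs p.1)) - (t p.2 - dist s' (rs p.2))|) = 0 ↔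
      ∃ t' : ℝ, ∀ i, t i = t' + dist (rs i) s' := by
  constructor
  · intro h
    have hbdd : BddAbove (Set.range fun p : I × I =>
        |(t p.1 - dist s' (rs p.1)) - (t p.2 - dist s' (rs p.2))|) := by
      refine ⟨2 * Metric.diam (Set.range rs), ?_⟩
      rintro x ⟨p, rfl⟩
      have h1 : |dist (rs p.1) s - dist (rs p.2) s| ≤ dist (rs p.1) (rs p.2) :=
        abs_dist_sub_le _ _ _
      have h2 : |dist (rs p.1) s' - dist (rs p.2) s'| ≤ dist (rs p.1) (rs p.2) :=
        abs_dist_sub_le _ _ _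
      have hd : dist (rs p.1) (rs p.2) ≤ Metric.diam (Set.range rs) :=
        Metric.dist_le_diam_of_mem hb ⟨p.1, rfl⟩ ⟨p.2, rfl⟩
      have he : (t p.1 - dist s' (rs p.1)) - (t p.2 - dist s' (rs p.2)) =
          (dist (rs p.1) s - dist (rs p.2) s) - (dist (rs p.1) s' - dist (rs p.2) s') := by
        rw [ht p.1, ht p.2, dist_comm s' (rs p.1), dist_comm s' (rs p.2)]; ring
      simp only []
      rw [he]
      calc |(dist (rs p.1) s - dist (rs p.2) s) - (dist (rs p.1) s' - dist (rs p.2) s')|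
          ≤ |dist (rs p.1) s - dist (rs p.2) s| + |dist (rs p.1) s' - dist (rs p.2) s'| :=
            abs_sub _ _
        _ ≤ 2 * Metric.diam (Set.range rs) := by linarith
    have hz : ∀ p : I × I,
        |(t p.1 - dist s' (rs p.1)) - (t p.2 - dist s' (rs p.2))| = 0 := fun p =>
      le_antisymm (h ▸ le_ciSup hbdd p) (abs_nonneg _)
    obtain ⟨i0⟩ := ‹Nonempty I›
    refine ⟨t i0 - dist s' (rs i0), fun i => ?_⟩
    have := abs_eq_zero.mp (hz (i, i0))
    have hc : dist (rs i) s' = dist s' (rs i) := dist_comm _ _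
    simp only at this
    linarith [sub_eq_zero.mp this]
  · rintro ⟨t', ht'⟩
    have : (fun p : I × I =>
        |(t p.1 - dist s' (rs p.1)) - (t p.2 - dist s' (rs p.2))|) = fun _ => 0 := by
      funext p
      simp [ht', dist_comm]
    rw [this, ciSup_const]
end

section
/- If the index set I is countable and (p_i)_{i∈I} is a probability distribution with all p_i > 0, then D_1(s') = 0 if and only if s' is a solution of the sound ranging problem, where D_1(x) = Σ_i p_i |τ_i(x) − Σ_j p_j τ_j(x)|. -/
theorem stmt5 {X I : Type*} [MetricSpace X] [Countable I] [Nonempty I]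
    (s s' : X) (t0 : ℝ)
    (rs : I → X) (hb : Bornology.IsBounded (Set.range rs))
    (t : I → ℝ) (ht : ∀ i, t i = t0 + dist (rs i) s)
    (p : I → ℝ) (hp : ∀ i, 0 < p i) (hp1 : ∑' i, p i = 1)
    (hsum : ∀ z : X, Summable fun i => p i * (t i - dist z (rs i)))
    (hsum' : ∀ z : X, Summable fun i =>
      p i * |(t i - dist z (rs i)) - ∑' j, p j * (t j - dist z (rs j))|) :
    (∑' i, p i * |(t i - dist s' (rs i)) -
        ∑' j, p j * (t j - dist s' (rs j))|) = 0 ↔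
      ∃ t' : ℝ, ∀ i, t i = t' + dist (rs i) s' := by
  set m : ℝ := ∑' j, p j * (t j - dist s' (rs j)) with hm
  have hnn : ∀ i, 0 ≤ p i * |(t i - dist s' (rs i)) - m| :=
    fun i => mul_nonneg (hp i).le (abs_nonneg _)
  constructor
  · intro h0
    refine ⟨m, fun i => ?_⟩
    have hle : p i * |(t i - dist s' (rs i)) - m| ≤ 0 := by
      rw [← h0]
      exact Summable.le_tsum (hsum' s') i fun j _ => hnn j
    have heq : p i * |(t i - dist s' (rs i)) - m| = 0 := le_antisymm hle (hnn i)
    have habs : |(t i - dist s' (rs i)) - m| = 0 := by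
      rcases mul_eq_zero.1 heq with h | h
      · exact absurd h (hp i).ne'
      · exact h
    have := abs_eq_zero.1 habs
    have : t i - dist s' (rs i) = m := by linarith
    rw [dist_comm] at this
    linarith
  · rintro ⟨t', ht'⟩
    have hτ : ∀ i, t i - dist s' (rs i) = t' := by
      intro i; rw [ht' i, dist_comm]; ring
    have hmval : m = t' := by
      rw [hm]
      have : ∀ i, p i * (t i - dist s' (rs i)) = p i * t' := fun i => by rw [hτ i]
      rw [tsum_congr this, tsum_mul_right, hp1, one_mul]
    have : ∀ i, p i * |(t i - dist s' (rs i)) - m| = 0 := by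
      intro i; rw [hτ i, hmval, sub_self, abs_zero, mul_zero]
    rw [tsum_congr this, tsum_zero]
end

section
/- In l², with sensors R = {±e_i : i ∈ ℕ} (the standard basis vectors and their negatives), source s = 0 and t_0 = 0 (so t_i = 1 for all sensors), the point x_n with coordinates x_j^{(n)} = 1/√n for j ≤ n and 0 otherwise lies on the unit sphere and satisfies D_∞(x_n) = √(2 + 2/√n) − √(2 − 2/√n), which tends to 0 as n → ∞. -/
open RealInnerProductSpace

noncomputable def l2e (i : ℕ) : lp (fun _ : ℕ => ℝ) 2 := lp.single 2 i 1

noncomputable def l2x (n : ℕ) : lp (fun _ : ℕ => ℝ) 2 :=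
  ∑ i ∈ Finset.range n, lp.single 2 i (1 / Real.sqrt n)

/-- The sensor set R = {±e_i}. -/
def sensors : Set (lp (fun _ : ℕ => ℝ) 2) := {u | ∃ i : ℕ, u = l2e i ∨ u = -l2e i}

lemma inner_l2x_e (n i : ℕ) :
    ⟪l2x n, l2e i⟫ = if i < n then 1 / Real.sqrt n else 0 := by
  rw [l2x, sum_inner]
  simp only [l2e, lp.inner_single_left, lp.single_apply]
  simp only [RCLike.inner_apply, starRingEnd_apply, star_trivial, eq_rec_constant,
    dite_eq_ite, mul_ite, mul_one, mul_zero]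
  simp only [Pi.single_apply, ite_mul, one_mul, zero_mul]
  rw [Finset.sum_ite_eq' (Finset.range n) i]
  simp [Finset.mem_range]

lemma inner_l2x_self {n : ℕ} (hn : 0 < n) : ⟪l2x n, l2x n⟫ = 1 := by
  nth_rewrite 1 [l2x]
  rw [sum_inner]
  simp only [lp.inner_single_left, RCLike.inner_apply, starRingEnd_apply, star_trivial]
  have hc : ∀ i ∈ Finset.range n, (1 / Real.sqrt n) * (l2x n : ∀ _ : ℕ, ℝ) i
      = 1 / (n : ℝ) := by
    intro i hi
    have h := inner_l2x_e n i
    simp only [l2e, lp.inner_single_right, RCLike.inner_apply, starRingEnd_apply,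
      star_trivial, mul_one] at h
    have h' : (l2x n : ∀ _ : ℕ, ℝ) i = 1 / Real.sqrt n := by
      rw [if_pos (Finset.mem_range.mp hi), one_mul] at h; exact h
    rw [h']
    rw [div_mul_div_comm, one_mul,
      Real.mul_self_sqrt (Nat.cast_nonneg n)]
  have hs : ∑ x ∈ Finset.range n, (l2x n : ∀ _ : ℕ, ℝ) x * (1 / Real.sqrt n) = 1 := by
    rw [Finset.sum_congr rfl (fun i hi => (mul_comm _ _).trans (hc i hi)), Finset.sum_const,
      Finset.card_range, nsmul_eq_mul]
    have : (n : ℝ) ≠ 0 := by positivity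
    field_simp
  exact hs

lemma norm_l2x {n : ℕ} (hn : 0 < n) : ‖l2x n‖ = 1 := by
  rw [norm_eq_sqrt_real_inner, inner_l2x_self hn, Real.sqrt_one]

lemma norm_l2e (i : ℕ) : ‖l2e i‖ = 1 := by
  rw [norm_eq_sqrt_real_inner]
  simp [l2e, lp.inner_single_left, lp.single_apply]

lemma norm_l2x_sub {n : ℕ} (hn : 0 < n) (u : lp (fun _ : ℕ => ℝ) 2) (hu : u ∈ sensors) :
    ‖l2x n - u‖ = Real.sqrt (2 - 2 * ⟪l2x n, u⟫) := by
  have hnu : ‖u‖ = 1 := by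
    obtain ⟨i, hi | hi⟩ := hu <;> rw [hi] <;> simp [norm_l2e]
  have h : ‖l2x n - u‖ ^ 2 = 2 - 2 * ⟪l2x n, u⟫ := by
    rw [norm_sub_sq_real, norm_l2x hn, hnu]; ring
  rw [← h, Real.sqrt_sq (norm_nonneg _)]

lemma abs_inner_le {n : ℕ} (hn : 0 < n) (u : lp (fun _ : ℕ => ℝ) 2) (hu : u ∈ sensors) :
    |⟪l2x n, u⟫| ≤ 1 / Real.sqrt n := by
  have hc : 0 ≤ 1 / Real.sqrt n := by positivity
  obtain ⟨i, hi | hi⟩ := hu <;> rw [hi]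
  · rw [inner_l2x_e]; split
    · rw [abs_of_nonneg hc]
    · simpa using hc
  · rw [inner_neg_right, abs_neg, inner_l2x_e]; split
    · rw [abs_of_nonneg hc]
    · simpa using hc

theorem stmt10 :
    (∀ n : ℕ, 0 < n →
      ‖l2x n‖ = 1 ∧
      (⨆ q : sensors × sensors,
          |(1 - ‖l2x n - (q.1 : lp (fun _ : ℕ => ℝ) 2)‖) -
            (1 - ‖l2x n - (q.2 : lp (fun _ : ℕ => ℝ) 2)‖)|) =
        Real.sqrt (2 + 2 / Real.sqrt n) - Real.sqrt (2 - 2 / Real.sqrt n)) ∧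
    Filter.Tendsto
      (fun n : ℕ => Real.sqrt (2 + 2 / Real.sqrt n) - Real.sqrt (2 - 2 / Real.sqrt n))
      Filter.atTop (nhds 0) := by
  constructor
  · intro n hn
    refine ⟨norm_l2x hn, ?_⟩
    set c : ℝ := 1 / Real.sqrt n with hc
    have hc0 : 0 ≤ c := by positivity
    have hc1 : c ≤ 1 := by
      rw [hc, div_le_one (Real.sqrt_pos.mpr (by exact_mod_cast hn))]
      exact Real.one_le_sqrt.mpr (by exact_mod_cast hn)
    have hlo : (0:ℝ) ≤ 2 - 2 * c := by linarith
    -- bounds for each sensor distance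
    have hband : ∀ u : sensors,
        Real.sqrt (2 - 2 * c) ≤ ‖l2x n - (u : lp (fun _ : ℕ => ℝ) 2)‖ ∧
        ‖l2x n - (u : lp (fun _ : ℕ => ℝ) 2)‖ ≤ Real.sqrt (2 + 2 * c) := by
      rintro ⟨u, hu⟩
      rw [norm_l2x_sub hn u hu]
      have h := abs_le.mp (abs_inner_le hn u hu)
      constructor <;> apply Real.sqrt_le_sqrt <;> simp only [← hc] at h ⊢ <;> linarith [h.1, h.2]
    have hM : Real.sqrt (2 + 2 / Real.sqrt n) - Real.sqrt (2 - 2 / Real.sqrt n)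
        = Real.sqrt (2 + 2 * c) - Real.sqrt (2 - 2 * c) := by
      rw [hc]; ring_nf
    rw [hM]
    have e0 : l2e 0 ∈ sensors := ⟨0, Or.inl rfl⟩
    have me0 : -l2e 0 ∈ sensors := ⟨0, Or.inr rfl⟩
    have hne : Nonempty (sensors × sensors) := ⟨⟨⟨_, e0⟩, ⟨_, e0⟩⟩⟩
    have hbound : ∀ q : sensors × sensors,
        |(1 - ‖l2x n - (q.1 : lp (fun _ : ℕ => ℝ) 2)‖) -
          (1 - ‖l2x n - (q.2 : lp (fun _ : ℕ => ℝ) 2)‖)| ≤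
          Real.sqrt (2 + 2 * c) - Real.sqrt (2 - 2 * c) := by
      intro q
      obtain ⟨h1l, h1u⟩ := hband q.1
      obtain ⟨h2l, h2u⟩ := hband q.2
      rw [abs_le]
      constructor <;> linarith
    apply le_antisymm
    · exact ciSup_le hbound
    · have hattain : (fun q : sensors × sensors =>
          |(1 - ‖l2x n - (q.1 : lp (fun _ : ℕ => ℝ) 2)‖) -
            (1 - ‖l2x n - (q.2 : lp (fun _ : ℕ => ℝ) 2)‖)|) ⟨⟨_, me0⟩, ⟨_, e0⟩⟩
          = Real.sqrt (2 + 2 * c) - Real.sqrt (2 - 2 * c) := by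
        have h1 : ‖l2x n - (-l2e 0)‖ = Real.sqrt (2 + 2 * c) := by
          rw [norm_l2x_sub hn _ me0, inner_neg_right, inner_l2x_e, if_pos hn]
          rw [hc]; congr 1 <;> ring
        have h2 : ‖l2x n - l2e 0‖ = Real.sqrt (2 - 2 * c) := by
          rw [norm_l2x_sub hn _ e0, inner_l2x_e, if_pos hn]
        simp only [h1, h2]
        rw [abs_of_nonpos (by
          have := Real.sqrt_le_sqrt (show (2 - 2*c : ℝ) ≤ 2 + 2*c by linarith)
          linarith)]
        ring
      calc Real.sqrt (2 + 2 * c) - Real.sqrt (2 - 2 * c) = _ := hattain.symm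
        _ ≤ _ := le_ciSup ⟨_, Set.forall_mem_range.mpr hbound⟩ _
  · have h1 : Filter.Tendsto (fun n : ℕ => 2 / Real.sqrt n) Filter.atTop (nhds 0) := by
      have hs : Filter.Tendsto Real.sqrt Filter.atTop Filter.atTop :=
        Filter.tendsto_atTop_atTop_of_monotone (fun a b h => Real.sqrt_le_sqrt h)
          (fun b => ⟨(max b 0) ^ 2, by
            rw [Real.sqrt_sq (le_max_right b 0)]; exact le_max_left _ _⟩)
      have : Filter.Tendsto (fun n : ℕ => Real.sqrt n) Filter.atTop Filter.atTop :=
        hs.comp tendsto_natCast_atTop_atTop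
      simpa [div_eq_mul_inv] using this.inv_tendsto_atTop.const_mul (2:ℝ)
    have hcont : Continuous (fun t : ℝ => Real.sqrt (2 + t) - Real.sqrt (2 - t)) :=
      (Real.continuous_sqrt.comp (continuous_const.add continuous_id)).sub
        (Real.continuous_sqrt.comp (continuous_const.sub continuous_id))
    have := (hcont.continuousAt (x := 0)).tendsto.comp h1
    simpa [Function.comp_def] using this
end

section
/- Let (X, ‖·‖) be a strictly convex normed space with dim X ≥ 2, s ∈ X with ‖s‖ ≥ 1, b = s/‖s‖, and r a unit vector with r ≠ b and r ≠ −b. If d₁, d₂ ≥ 1 satisfy ‖r − d₁ b‖ − d₁ = ‖r − d₂ b‖ − d₂, then d₁ = d₂. -/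
lemma aux17 {X : Type*} [NormedAddCommGroup X] [NormedSpace ℝ X]
    [StrictConvexSpace ℝ X] (b r : X) (hb : ‖b‖ = 1) (hr : ‖r‖ = 1)
    (hrb : r ≠ b) (hrb' : r ≠ -b) (d₁ d₂ : ℝ) (hd₁ : 1 ≤ d₁) (hlt : d₁ < d₂)
    (heq : ‖r - d₁ • b‖ - d₁ = ‖r - d₂ • b‖ - d₂) : False := by
  have hbne : b ≠ 0 := by intro h; rw [h, norm_zero] at hb; norm_num at hb
  set x := r - d₁ • b with hx
  set y := (d₁ - d₂) • b with hy
  have hxy : x + y = r - d₂ • b := by rw [hx, hy]; rw [sub_smul]; abel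
  have hny : ‖y‖ = d₂ - d₁ := by
    rw [hy, norm_smul, hb, mul_one, Real.norm_eq_abs, abs_of_neg (by linarith)]
    ring
  have hsum : ‖x + y‖ = ‖x‖ + ‖y‖ := by
    rw [hxy, hny]; linarith [heq]
  have hray : SameRay ℝ x y := sameRay_iff_norm_add.mpr hsum
  have hxne : x ≠ 0 := by
    intro h
    have : r = d₁ • b := by rw [hx] at h; linear_combination (norm := module) h
    have h1 : (1:ℝ) = |d₁| := by
      rw [← hr, this, norm_smul, hb, mul_one, Real.norm_eq_abs]
    have : d₁ = 1 := by rw [abs_of_pos (by linarith)] at h1; linarith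
    apply hrb; rw [‹r = d₁ • b›, this, one_smul]
  obtain ⟨t, ht0, hts⟩ := hray.exists_nonneg_left hxne
  have hyne : y ≠ 0 := by
    rw [hy]; exact smul_ne_zero (by intro h; linarith [h]) hbne
  have htne : t ≠ 0 := by
    intro h; rw [h, zero_smul] at hts; exact hyne hts.symm
  have hxval : x = (t⁻¹ * (d₁ - d₂)) • b := by
    have := congrArg (fun z => t⁻¹ • z) hts
    simp only [smul_smul, inv_mul_cancel₀ htne, one_smul, hy] at this
    exact this
  set c := t⁻¹ * (d₁ - d₂) with hc
  have hcneg : c < 0 := mul_neg_of_pos_of_neg (inv_pos.mpr (ht0.lt_of_ne (Ne.symm htne))) (by linarith)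
  have hrvb : r = (d₁ + c) • b := by
    rw [hx] at hxval
    linear_combination (norm := module) hxval
  have habs : |d₁ + c| = 1 := by
    have := hr
    rw [hrvb, norm_smul, hb, mul_one, Real.norm_eq_abs] at this
    exact this
  rcases abs_eq (by norm_num : (0:ℝ) ≤ 1) |>.mp habs with h | h
  · apply hrb; rw [hrvb, h, one_smul]
  · apply hrb'; rw [hrvb, h, neg_smul, one_smul]

theorem stmt17 {X : Type*} [NormedAddCommGroup X] [NormedSpace ℝ X]
    [StrictConvexSpace ℝ X] (hdim : 2 ≤ Module.rank ℝ X)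
    (s : X) (hs : 1 ≤ ‖s‖)
    (r : X) (hr : ‖r‖ = 1) (hrb : r ≠ ‖s‖⁻¹ • s) (hrb' : r ≠ -(‖s‖⁻¹ • s))
    (d₁ d₂ : ℝ) (hd₁ : 1 ≤ d₁) (hd₂ : 1 ≤ d₂)
    (heq : ‖r - d₁ • (‖s‖⁻¹ • s)‖ - d₁ = ‖r - d₂ • (‖s‖⁻¹ • s)‖ - d₂) :
    d₁ = d₂ := by
  have hb : ‖(‖s‖⁻¹ • s)‖ = 1 := by
    rw [norm_smul, Real.norm_eq_abs, abs_of_pos (inv_pos.mpr (by linarith)),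
      inv_mul_cancel₀ (by linarith)]
  rcases lt_trichotomy d₁ d₂ with h | h | h
  · exact absurd heq (fun heq => aux17 _ r hb hr hrb hrb' d₁ d₂ hd₁ h heq)
  · exact h
  · exact absurd heq.symm (fun heq => aux17 _ r hb hr hrb hrb' d₂ d₁ hd₂ h heq)
end

section
/- In a strictly convex normed space with dim X ≥ 2, for s in the closed unit ball and the sensor set R = S[0;1] (the whole unit sphere) with t_r = t_0 + ‖s − r‖, the closed unit ball A = B[0;1] has the SDN property: for any x ∈ A with ‖x − s‖ ≥ δ > 0 one has D_∞(x) ≥ 2δ, where D_∞(x) = sup_{u,v ∈ R} |(t_u − ‖x − u‖) − (t_v − ‖x − v‖)|. -/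
theorem stmt18 {X : Type*} [NormedAddCommGroup X] [NormedSpace ℝ X]
    [StrictConvexSpace ℝ X] (hdim : 2 ≤ Module.rank ℝ X)
    (s x : X) (hs : ‖s‖ ≤ 1) (hx : ‖x‖ ≤ 1)
    (t0 δ : ℝ) (hδ : 0 < δ) (hxs : δ ≤ ‖x - s‖) :
    2 * δ ≤
      ⨆ q : Metric.sphere (0 : X) 1 × Metric.sphere (0 : X) 1,
        |(t0 + ‖s - (q.1 : X)‖ - ‖x - (q.1 : X)‖) -
          (t0 + ‖s - (q.2 : X)‖ - ‖x - (q.2 : X)‖)| := by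
  set r : ℝ := ‖x - s‖ with hrdef
  have hr0 : 0 < r := lt_of_lt_of_le hδ hxs
  set v : X := r⁻¹ • (x - s) with hvdef
  have hvnorm : ‖v‖ = 1 := by
    rw [hvdef, norm_smul, norm_inv, Real.norm_eq_abs, abs_of_pos hr0, ← hrdef]
    field_simp
  have hrv : r • v = x - s := smul_inv_smul₀ hr0.ne' _
  have hcont : Continuous fun d : ℝ => ‖s + d • v‖ :=
    (continuous_const.add (continuous_id.smul continuous_const)).norm
  have hlow : ∀ d : ℝ, |d| - 1 ≤ ‖s + d • v‖ := by
    intro d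
    have h1 : ‖d • v‖ = ‖(s + d • v) - s‖ := by rw [add_sub_cancel_left]
    have h2 : ‖(s + d • v) - s‖ ≤ ‖s + d • v‖ + ‖s‖ := norm_sub_le _ _
    have h3 : ‖d • v‖ = |d| := by rw [norm_smul, hvnorm, Real.norm_eq_abs, mul_one]
    linarith
  -- find d₊ ≥ r on the sphere
  have hfr : ‖s + r • v‖ = ‖x‖ := by rw [hrv]; congr 1; abel
  have hplus : (1 : ℝ) ∈ Set.Icc (‖s + r • v‖) (‖s + (r + 2) • v‖) := by
    constructor
    · rw [hfr]; exact hx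
    · have := hlow (r + 2)
      have : |r + 2| = r + 2 := abs_of_pos (by linarith)
      have := hlow (r + 2)
      rw [‹|r + 2| = r + 2›] at this
      linarith
  obtain ⟨dp, hdpmem, hdp⟩ := intermediate_value_Icc (by linarith : r ≤ r + 2)
    hcont.continuousOn hplus
  -- find d₋ ≤ 0 on the sphere
  have hminus : (1 : ℝ) ∈ Set.Icc (‖s + (0:ℝ) • v‖) (‖s + (-2 : ℝ) • v‖) := by
    constructor
    · simpa using hs
    · have := hlow (-2)
      rw [show |(-2 : ℝ)| = 2 by norm_num] at this
      linarith
  obtain ⟨dm, hdmmem, hdm⟩ := intermediate_value_Icc' (by norm_num : (-2:ℝ) ≤ 0)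
    hcont.continuousOn hminus
  have hdp1 : dp ∈ Set.Icc r (r + 2) := hdpmem
  have hdm1 : dm ∈ Set.Icc (-2 : ℝ) 0 := hdmmem
  have hdpr : r ≤ dp := hdp1.1
  have hdm0 : dm ≤ 0 := hdm1.2
  -- the two sphere points
  have hup : s + dp • v ∈ Metric.sphere (0 : X) 1 := by
    rw [mem_sphere_zero_iff_norm]; exact hdp
  have hum : s + dm • v ∈ Metric.sphere (0 : X) 1 := by
    rw [mem_sphere_zero_iff_norm]; exact hdm
  -- distance computations
  have hsu : ∀ d : ℝ, ‖s - (s + d • v)‖ = |d| := by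
    intro d
    rw [show s - (s + d • v) = -(d • v) by abel, norm_neg, norm_smul, hvnorm,
      Real.norm_eq_abs, mul_one]
  have hxu : ∀ d : ℝ, ‖x - (s + d • v)‖ = |r - d| := by
    intro d
    rw [show x - (s + d • v) = (x - s) - d • v by abel, ← hrv, ← sub_smul,
      norm_smul, hvnorm, Real.norm_eq_abs, mul_one]
  -- bounded above
  have hbdd : BddAbove (Set.range fun q : Metric.sphere (0 : X) 1 × Metric.sphere (0 : X) 1 =>
      |(t0 + ‖s - (q.1 : X)‖ - ‖x - (q.1 : X)‖) -
        (t0 + ‖s - (q.2 : X)‖ - ‖x - (q.2 : X)‖)|) := by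
    refine ⟨2 * ‖s - x‖, ?_⟩
    rintro _ ⟨q, rfl⟩
    have h1 : |‖s - (q.1 : X)‖ - ‖x - (q.1 : X)‖| ≤ ‖s - x‖ := by
      have := abs_norm_sub_norm_le (s - (q.1 : X)) (x - (q.1 : X))
      simpa [sub_sub_sub_cancel_right] using this
    have h2 : |‖s - (q.2 : X)‖ - ‖x - (q.2 : X)‖| ≤ ‖s - x‖ := by
      have := abs_norm_sub_norm_le (s - (q.2 : X)) (x - (q.2 : X))
      simpa [sub_sub_sub_cancel_right] using this
    have : (t0 + ‖s - (q.1 : X)‖ - ‖x - (q.1 : X)‖) -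
        (t0 + ‖s - (q.2 : X)‖ - ‖x - (q.2 : X)‖) =
        (‖s - (q.1 : X)‖ - ‖x - (q.1 : X)‖) - (‖s - (q.2 : X)‖ - ‖x - (q.2 : X)‖) := by
      ring
    simp only [this]
    calc |(‖s - (q.1 : X)‖ - ‖x - (q.1 : X)‖) - (‖s - (q.2 : X)‖ - ‖x - (q.2 : X)‖)|
        ≤ |‖s - (q.1 : X)‖ - ‖x - (q.1 : X)‖| + |‖s - (q.2 : X)‖ - ‖x - (q.2 : X)‖| :=
          abs_sub _ _
      _ ≤ 2 * ‖s - x‖ := by linarith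
  refine le_ciSup_of_le hbdd (⟨s + dp • v, hup⟩, ⟨s + dm • v, hum⟩) ?_
  simp only [hsu, hxu]
  rw [abs_of_nonneg (by linarith : (0:ℝ) ≤ dp), abs_of_nonpos (by linarith : r - dp ≤ 0),
    abs_of_nonpos hdm0, abs_of_nonneg (by linarith : (0:ℝ) ≤ r - dm)]
  rw [show t0 + dp - -(r - dp) - (t0 + -dm - (r - dm)) = 2 * r by ring,
    abs_of_pos (by linarith : (0:ℝ) < 2 * r)]
  linarith
end
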